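/- arXiv:2007.11041 — 2 statements merged into one kernel-verified Lean document; each statement's English description precedes it below -/
import Mathlib

section
/- For every integer k ≥ 1 and all real numbers a ≤ b, ∫_a^b |err(x)|^k dx ≤ (ε^k/(k+1)) · ∫_a^b |x|^k dx + (2/(k+1)) · (|a|^{k+1} + |b|^{k+1}) · (ε/(1−ε))^{k+1}. -/
open MeasureTheory Set

noncomputable def flF (F : Set ℝ) (x : ℝ) : ℝ := sSup (F ∩ Set.Iic x)
noncomputable def ceF (F : Set ℝ) (x : ℝ) : ℝ := sInf (F ∩ Set.Ici x)

lemma flF_mem {F : Set ℝ} (hF : IsClosed F) (hb : ∀ x : ℝ, ∃ z ∈ F, z ≤ x) (x : ℝ) :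
    flF F x ∈ F ∩ Set.Iic x := by
  obtain ⟨z, hz, hzx⟩ := hb x
  exact (hF.inter isClosed_Iic).csSup_mem ⟨z, hz, hzx⟩ ⟨x, fun y hy => hy.2⟩

lemma ceF_mem {F : Set ℝ} (hF : IsClosed F) (ha : ∀ x : ℝ, ∃ z ∈ F, x ≤ z) (x : ℝ) :
    ceF F x ∈ F ∩ Set.Ici x := by
  obtain ⟨z, hz, hzx⟩ := ha x
  exact (hF.inter isClosed_Ici).csInf_mem ⟨z, hz, hzx⟩ ⟨x, fun y hy => hy.2⟩

lemma flF_eq_self {F : Set ℝ} (hF : IsClosed F) (hb : ∀ x : ℝ, ∃ z ∈ F, z ≤ x)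
    {x : ℝ} (hx : x ∈ F) : flF F x = x :=
  le_antisymm (flF_mem hF hb x).2 (le_csSup ⟨x, fun y hy => hy.2⟩ ⟨hx, Set.self_mem_Iic⟩)

lemma ceF_eq_self {F : Set ℝ} (hF : IsClosed F) (ha : ∀ x : ℝ, ∃ z ∈ F, x ≤ z)
    {x : ℝ} (hx : x ∈ F) : ceF F x = x :=
  le_antisymm (csInf_le ⟨x, fun y hy => hy.2⟩ ⟨hx, Set.self_mem_Ici⟩) (ceF_mem hF ha x).2

lemma flF_eq_of_cell {F : Set ℝ} {z z' y : ℝ} (hz : z ∈ F)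
    (hcell : Set.Ioo z z' ∩ F = ∅) (hy : y ∈ Set.Ioo z z') : flF F y = z := by
  refine le_antisymm (csSup_le ⟨z, hz, hy.1.le⟩ ?_) (le_csSup ⟨y, fun w hw => hw.2⟩ ⟨hz, hy.1.le⟩)
  rintro w ⟨hwF, hwy⟩
  by_contra hlt
  push_neg at hlt
  have : w ∈ Set.Ioo z z' ∩ F := ⟨⟨hlt, lt_of_le_of_lt hwy hy.2⟩, hwF⟩
  simp [hcell] at this

lemma ceF_eq_of_cell {F : Set ℝ} {z z' y : ℝ} (hz' : z' ∈ F)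
    (hcell : Set.Ioo z z' ∩ F = ∅) (hy : y ∈ Set.Ioo z z') : ceF F y = z' := by
  refine le_antisymm (csInf_le ⟨y, fun w hw => hw.2⟩ ⟨hz', hy.2.le⟩) (le_csInf ⟨z', hz', hy.2.le⟩ ?_)
  rintro w ⟨hwF, hwy⟩
  by_contra hlt
  push_neg at hlt
  have : w ∈ Set.Ioo z z' ∩ F := ⟨⟨lt_of_lt_of_le hy.1 hwy, hlt⟩, hwF⟩
  simp [hcell] at this

lemma cells_eq {F : Set ℝ} {z1 z1' z2 z2' x : ℝ} (h1 : z1 ∈ F) (h1' : z1' ∈ F)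
    (h2 : z2 ∈ F) (h2' : z2' ∈ F) (e1 : Set.Ioo z1 z1' ∩ F = ∅) (e2 : Set.Ioo z2 z2' ∩ F = ∅)
    (hx1 : x ∈ Set.Ioo z1 z1') (hx2 : x ∈ Set.Ioo z2 z2') : z1 = z2 ∧ z1' = z2' := by
  constructor
  · rw [← flF_eq_of_cell h1 e1 hx1, ← flF_eq_of_cell h2 e2 hx2]
  · rw [← ceF_eq_of_cell h1' e1 hx1, ← ceF_eq_of_cell h2' e2 hx2]

lemma half_pow_avg {u v : ℝ} (hu : 0 ≤ u) (hv : 0 ≤ v) (k : ℕ) :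
    ((u + v) / 2) ^ k ≤ (u ^ k + v ^ k) / 2 := by
  have h := (convexOn_pow (𝕜 := ℝ) k).2 (Set.mem_Ici.2 hu) (Set.mem_Ici.2 hv)
    (by norm_num : (0:ℝ) ≤ 1/2) (by norm_num : (0:ℝ) ≤ 1/2) (by norm_num)
  simp only [smul_eq_mul] at h
  calc ((u + v) / 2) ^ k = (1/2 * u + 1/2 * v) ^ k := by ring_nf
    _ ≤ 1/2 * u ^ k + 1/2 * v ^ k := h
    _ = (u ^ k + v ^ k) / 2 := by ring

lemma jensen_abs_pow (k : ℕ) {z z' : ℝ} (h : z ≤ z') :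
    (z' - z) * |(z + z') / 2| ^ k ≤ ∫ x in z..z', |x| ^ k := by
  have hc : ∀ c : ℝ, IntervalIntegrable (fun x => |c - x| ^ k) volume z z' :=
    fun c => ((continuous_const.sub continuous_id).abs.pow k).intervalIntegrable _ _
  have hid : IntervalIntegrable (fun x => |x| ^ k) volume z z' :=
    (continuous_abs.pow k).intervalIntegrable _ _
  have hrefl : (∫ x in z..z', |z + z' - x| ^ k) = ∫ x in z..z', |x| ^ k := by
    have := intervalIntegral.integral_comp_sub_left (a := z) (b := z') (fun u => |u| ^ k) (z + z')
    simpa using this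
  have hpt : ∀ x ∈ Set.Icc z z', |(z + z')/2| ^ k ≤ (|x| ^ k + |z + z' - x| ^ k) / 2 := by
    intro x _
    have h1 : |(z + z')/2| ≤ (|x| + |z + z' - x|) / 2 := by
      have := abs_add_le x (z + z' - x)
      rw [show x + (z + z' - x) = z + z' by ring] at this
      rw [abs_div]
      simp only [abs_two]
      linarith
    calc |(z + z')/2| ^ k ≤ ((|x| + |z + z' - x|) / 2) ^ k :=
          pow_le_pow_left₀ (abs_nonneg _) h1 k
      _ ≤ (|x| ^ k + |z + z' - x| ^ k) / 2 := half_pow_avg (abs_nonneg _) (abs_nonneg _) k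
  have hmono : (∫ _x in z..z', |(z + z')/2| ^ k)
      ≤ ∫ x in z..z', (|x| ^ k + |z + z' - x| ^ k) / 2 :=
    intervalIntegral.integral_mono_on h intervalIntegrable_const
      (((hid.add (hc (z + z'))).div_const 2)) hpt
  rw [intervalIntegral.integral_const, smul_eq_mul] at hmono
  have heq : (∫ x in z..z', (|x| ^ k + |z + z' - x| ^ k) / 2) = ∫ x in z..z', |x| ^ k := by
    rw [intervalIntegral.integral_div, intervalIntegral.integral_add hid (hc (z + z')), hrefl]
    ring
  linarith [hmono, heq.le, heq.ge]

lemma cell_integral (k : ℕ) {z z' : ℝ} (h : z ≤ z') :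
    (∫ x in z..z', (min (x - z) (z' - x)) ^ k) = 2 * (((z' - z) / 2) ^ (k + 1) / (k + 1)) := by
  set m := (z + z') / 2 with hm
  have hzm : z ≤ m := by rw [hm]; linarith
  have hmz' : m ≤ z' := by rw [hm]; linarith
  have hint : ∀ u v : ℝ, IntervalIntegrable (fun x => (min (x - z) (z' - x)) ^ k) volume u v :=
    fun u v => (((continuous_id.sub continuous_const).min
      (continuous_const.sub continuous_id)).pow k).intervalIntegrable _ _
  have hsplit : (∫ x in z..z', (min (x - z) (z' - x)) ^ k)
      = (∫ x in z..m, (min (x - z) (z' - x)) ^ k) + ∫ x in m..z', (min (x - z) (z' - x)) ^ k :=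
    (intervalIntegral.integral_add_adjacent_intervals (hint z m) (hint m z')).symm
  have h1 : (∫ x in z..m, (min (x - z) (z' - x)) ^ k) = ∫ x in z..m, (x - z) ^ k := by
    apply intervalIntegral.integral_congr
    intro x hx
    rw [Set.uIcc_of_le hzm] at hx
    have : x - z ≤ z' - x := by have := hx.2; rw [hm] at this; linarith
    simp [min_eq_left this]
  have h2 : (∫ x in m..z', (min (x - z) (z' - x)) ^ k) = ∫ x in m..z', (z' - x) ^ k := by
    apply intervalIntegral.integral_congr
    intro x hx
    rw [Set.uIcc_of_le hmz'] at hx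
    have : z' - x ≤ x - z := by have := hx.1; rw [hm] at this; linarith
    simp [min_eq_right this]
  have e1 : (∫ x in z..m, (x - z) ^ k) = (m - z) ^ (k + 1) / (k + 1) := by
    have := intervalIntegral.integral_comp_sub_right (a := z) (b := m) (fun u => u ^ k) z
    simp only [sub_self] at this
    rw [this, integral_pow]
    simp
  have e2 : (∫ x in m..z', (z' - x) ^ k) = (z' - m) ^ (k + 1) / (k + 1) := by
    have := intervalIntegral.integral_comp_sub_left (a := m) (b := z') (fun u => u ^ k) z'
    simp only [sub_self] at this
    rw [this, integral_pow]
    simp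
  have hmz : m - z = (z' - z) / 2 := by rw [hm]; ring
  have hz'm : z' - m = (z' - z) / 2 := by rw [hm]; ring
  rw [hsplit, h1, h2, e1, e2, hmz, hz'm]
  ring

theorem error_int_nearest_mult
    (F : Set ℝ) (hF_closed : IsClosed F) (hF_ne : F.Nonempty)
    (hF_below : ∀ x : ℝ, ∃ z ∈ F, z ≤ x) (hF_above : ∀ x : ℝ, ∃ z ∈ F, x ≤ z)
    (rd : ℝ → ℝ) (hrd_meas : Measurable rd)
    (hrd_mem : ∀ x : ℝ, rd x = flF F x ∨ rd x = ceF F x)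
    (hrd_near : ∀ x : ℝ, |rd x - x| = min (x - flF F x) (ceF F x - x))
    (ε : ℝ) (hε0 : 0 ≤ ε) (hε1 : ε < 1)
    (hbound : ∀ x : ℝ, |rd x - x| ≤ ε * |x|)
    (k : ℕ) (hk : 1 ≤ k) (a b : ℝ) (hab : a ≤ b) :
    (∫ x in a..b, |rd x - x| ^ k)
      ≤ (ε ^ k / (k + 1)) * (∫ x in a..b, |x| ^ k)
        + (2 / (k + 1)) * (|a| ^ (k + 1) + |b| ^ (k + 1)) * (ε / (1 - ε)) ^ (k + 1) := by
  classical
  have hε1' : (0:ℝ) < 1 - ε := by linarith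
  have hkpos : (0:ℝ) < (k:ℝ) + 1 := by positivity
  set f : ℝ → ℝ := fun x => |rd x - x| ^ k with hf
  set g : ℝ → ℝ := fun x => |x| ^ k with hg
  have hf0 : ∀ x, 0 ≤ f x := fun x => pow_nonneg (abs_nonneg _) k
  have hg0 : ∀ x, 0 ≤ g x := fun x => pow_nonneg (abs_nonneg _) k
  have hfmeas : Measurable f := (hrd_meas.sub measurable_id).abs.pow_const k
  have hfint : IntegrableOn f (Set.Ioo a b) := by
    have hc : IntegrableOn (fun _ : ℝ => (ε * max |a| |b|) ^ k) (Set.Ioo a b) :=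
      integrableOn_const measure_Ioo_lt_top.ne enorm_ne_top
    refine Integrable.mono' hc hfmeas.aestronglyMeasurable ?_
    refine (ae_restrict_iff' measurableSet_Ioo).2 (Filter.Eventually.of_forall ?_)
    intro x hx
    have h1 : |x| ≤ max |a| |b| := abs_le_max_abs_abs hx.1.le hx.2.le
    have h2 : |rd x - x| ≤ ε * max |a| |b| :=
      (hbound x).trans (mul_le_mul_of_nonneg_left h1 hε0)
    calc ‖f x‖ = |rd x - x| ^ k := by
          rw [Real.norm_eq_abs, abs_of_nonneg (hf0 x)]
      _ ≤ (ε * max |a| |b|) ^ k := pow_le_pow_left₀ (abs_nonneg _) h2 k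
  have hgint : IntegrableOn g (Set.Ioo a b) :=
    ((continuous_abs.pow k).integrableOn_Icc).mono_set Set.Ioo_subset_Icc_self
  -- the index type of gap intervals ("cells") meeting (a,b)
  let ι := {p : ℝ × ℝ // p.1 ∈ F ∧ p.2 ∈ F ∧ p.1 < p.2 ∧ Set.Ioo p.1 p.2 ∩ F = ∅ ∧
    (Set.Ioo p.1 p.2 ∩ Set.Ioo a b).Nonempty}
  let s : ι → Set ℝ := fun p => Set.Ioo p.1.1 p.1.2 ∩ Set.Ioo a b
  have hcelldisj : Pairwise (Function.onFun Disjoint fun p : ι => Set.Ioo p.1.1 p.1.2) := by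
    intro p q hpq
    rw [Function.onFun, Set.disjoint_left]
    intro x hxp hxq
    obtain ⟨h1, h1', _, e1, _⟩ := p.2
    obtain ⟨h2, h2', _, e2, _⟩ := q.2
    obtain ⟨ea, eb⟩ := cells_eq h1 h1' h2 h2' e1 e2 hxp hxq
    exact hpq (Subtype.ext (Prod.ext ea eb))
  have hsdisj : Pairwise (Function.onFun Disjoint s) := fun p q h =>
    ((hcelldisj h).mono Set.inter_subset_left Set.inter_subset_left)
  have : Countable ι :=
    hsdisj.countable_of_isOpen_disjoint (fun p => isOpen_Ioo.inter isOpen_Ioo)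
      (fun p => p.2.2.2.2.2)
  have hcover : Set.Ioo a b \ F = ⋃ p : ι, s p := by
    ext x
    constructor
    · rintro ⟨hxab, hxF⟩
      have hfl := flF_mem hF_closed hF_below x
      have hce := ceF_mem hF_closed hF_above x
      have hflx : flF F x < x := lt_of_le_of_ne hfl.2 (fun h => hxF (by rw [← h]; exact hfl.1))
      have hxce : x < ceF F x := lt_of_le_of_ne hce.2 (fun h => hxF (by rw [h]; exact hce.1))
      have hempty : Set.Ioo (flF F x) (ceF F x) ∩ F = ∅ := by
        ext y
        simp only [Set.mem_inter_iff, Set.mem_Ioo, Set.mem_empty_iff_false, iff_false, not_and]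
        rintro ⟨hy1, hy2⟩ hyF
        rcases le_or_gt y x with h | h
        · exact absurd (le_csSup ⟨x, fun w hw => hw.2⟩ (Set.mem_inter hyF (Set.mem_Iic.2 h))) (not_le.2 hy1)
        · exact absurd (csInf_le ⟨x, fun w hw => hw.2⟩ (Set.mem_inter hyF (Set.mem_Ici.2 h.le))) (not_le.2 hy2)
      exact Set.mem_iUnion.2 ⟨⟨(flF F x, ceF F x), hfl.1, hce.1, hflx.trans hxce, hempty,
        ⟨x, ⟨hflx, hxce⟩, hxab⟩⟩, ⟨hflx, hxce⟩, hxab⟩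
    · intro hx
      obtain ⟨p, hp⟩ := Set.mem_iUnion.1 hx
      refine ⟨hp.2, fun hxF => ?_⟩
      have hxmem : x ∈ Set.Ioo p.1.1 p.1.2 ∩ F := ⟨hp.1, hxF⟩
      rw [p.2.2.2.2.1] at hxmem
      exact hxmem
  -- constants
  set A := 2 / ((k:ℝ) + 1) * (ε / (1 - ε)) ^ (k + 1) * |a| ^ (k + 1) with hAdef
  set B := 2 / ((k:ℝ) + 1) * (ε / (1 - ε)) ^ (k + 1) * |b| ^ (k + 1) with hBdef
  have hA0 : 0 ≤ A := by
    apply mul_nonneg (mul_nonneg (by positivity) (pow_nonneg (div_nonneg hε0 hε1'.le) _))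
    positivity
  have hB0 : 0 ≤ B := by
    apply mul_nonneg (mul_nonneg (by positivity) (pow_nonneg (div_nonneg hε0 hε1'.le) _))
    positivity
  let s' : ι → Set ℝ := fun p => if a ≤ p.1.1 ∧ p.1.2 ≤ b then Set.Ioo p.1.1 p.1.2 else ∅
  let T : ι → ℝ := fun p => ε ^ k / ((k:ℝ) + 1) * ∫ x in s' p, g x
  let B1 : ι → ℝ := fun p => if p.1.1 < a then A else 0
  let B2 : ι → ℝ := fun p => if b < p.1.2 then B else 0
  have hs'sub : ∀ p : ι, s' p ⊆ Set.Ioo a b := by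
    intro p
    simp only [s']
    split
    · rename_i h
      exact fun x hx => ⟨lt_of_le_of_lt h.1 hx.1, lt_of_lt_of_le hx.2 h.2⟩
    · exact Set.empty_subset _
  have hs'cell : ∀ p : ι, s' p ⊆ Set.Ioo p.1.1 p.1.2 := by
    intro p
    simp only [s']
    split
    · exact subset_rfl
    · exact Set.empty_subset _
  have hs'meas : ∀ p : ι, MeasurableSet (s' p) := by
    intro p
    simp only [s']
    split
    · exact measurableSet_Ioo
    · exact MeasurableSet.empty
  have hs'disj : Pairwise (Function.onFun Disjoint s') := fun p q h =>
    ((hcelldisj h).mono (hs'cell p) (hs'cell q))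
  have hmema : ∀ p : ι, p.1.1 < a → a ∈ Set.Ioo p.1.1 p.1.2 := by
    intro p hpa
    obtain ⟨x, hx⟩ := p.2.2.2.2.2
    obtain ⟨⟨h1, h2⟩, ⟨h3, h4⟩⟩ := hx
    exact Set.mem_Ioo.2 ⟨hpa, h3.trans h2⟩
  have hmemb : ∀ p : ι, b < p.1.2 → b ∈ Set.Ioo p.1.1 p.1.2 := by
    intro p hpb
    obtain ⟨x, hx⟩ := p.2.2.2.2.2
    obtain ⟨⟨h1, h2⟩, ⟨h3, h4⟩⟩ := hx
    exact Set.mem_Ioo.2 ⟨h1.trans h4, hpb⟩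
  -- the per-cell bound
  have key : ∀ p : ι, (∫ x in s p, f x) ≤ T p + B1 p + B2 p := by
    intro p
    obtain ⟨hzF, hz'F, hzz', hcell, hne⟩ := p.2
    set z := p.1.1 with hzdef
    set z' := p.1.2 with hz'def
    set m := (z + z') / 2 with hm
    set h2 := (z' - z) / 2 with hh2def
    have hh2pos : 0 < h2 := by rw [hh2def]; linarith
    have herr : ∀ y ∈ Set.Ioo z z', |rd y - y| = min (y - z) (z' - y) := by
      intro y hy
      rw [hrd_near y, flF_eq_of_cell hzF hcell hy, ceF_eq_of_cell hz'F hcell hy]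
    have hmmem : m ∈ Set.Ioo z z' := ⟨by rw [hm]; linarith, by rw [hm]; linarith⟩
    have hh2e : h2 ≤ ε * |m| := by
      have h := hbound m
      rw [herr m hmmem] at h
      have e1 : m - z = h2 := by rw [hm, hh2def]; ring
      have e2 : z' - m = h2 := by rw [hm, hh2def]; ring
      rw [e1, e2, min_self] at h
      exact h
    have hfφ : Set.EqOn f (fun x => (min (x - z) (z' - x)) ^ k) (Set.Ioo z z') := by
      intro y hy
      simp only [hf]
      rw [herr y hy]
    have hφint : IntegrableOn (fun x => (min (x - z) (z' - x)) ^ k) (Set.Ioo z z') :=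
      ((((continuous_id.sub continuous_const).min
        (continuous_const.sub continuous_id)).pow k).integrableOn_Icc).mono_set
        Set.Ioo_subset_Icc_self
    have hfint' : IntegrableOn f (Set.Ioo z z') :=
      hφint.congr_fun (fun y hy => (hfφ hy).symm) measurableSet_Ioo
    have hIle : (∫ x in s p, f x) ≤ ∫ x in Set.Ioo z z', f x :=
      setIntegral_mono_set hfint' (Filter.Eventually.of_forall hf0)
        (HasSubset.Subset.eventuallyLE Set.inter_subset_left)
    have hIoo : (∫ x in Set.Ioo z z', f x) = 2 * (h2 ^ (k + 1) / ((k:ℝ) + 1)) := by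
      rw [setIntegral_congr_fun measurableSet_Ioo hfφ,
        ← MeasureTheory.integral_Ioc_eq_integral_Ioo,
        ← intervalIntegral.integral_of_le hzz'.le, cell_integral k hzz'.le, hh2def]
    by_cases hin : a ≤ z ∧ z' ≤ b
    · have hB1 : B1 p = 0 := if_neg (not_lt.2 hin.1)
      have hB2 : B2 p = 0 := if_neg (not_lt.2 hin.2)
      have hT : T p = ε ^ k / ((k:ℝ) + 1) * ∫ x in Set.Ioo z z', g x := by
        show ε ^ k / ((k:ℝ) + 1) * (∫ x in (if a ≤ z ∧ z' ≤ b then Set.Ioo z z' else ∅), g x) = _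
        simp only [T, s', if_pos hin]
      have hjen := jensen_abs_pow k hzz'.le
      have hgIoo : (∫ x in Set.Ioo z z', g x) = ∫ x in z..z', |x| ^ k := by
        rw [intervalIntegral.integral_of_le hzz'.le,
          MeasureTheory.integral_Ioc_eq_integral_Ioo]
      have h2' : 2 * h2 ^ (k + 1) ≤ ε ^ k * ∫ x in z..z', |x| ^ k := by
        calc 2 * h2 ^ (k + 1) = 2 * h2 * h2 ^ k := by ring
          _ ≤ 2 * h2 * (ε * |m|) ^ k := by
              have hp := pow_le_pow_left₀ hh2pos.le hh2e k
              have : (0:ℝ) ≤ 2 * h2 := by linarith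
              exact mul_le_mul_of_nonneg_left hp this
          _ = ε ^ k * ((z' - z) * |m| ^ k) := by
              rw [mul_pow, hh2def]; ring
          _ ≤ ε ^ k * ∫ x in z..z', |x| ^ k :=
              mul_le_mul_of_nonneg_left (by rw [hm]; exact hjen)
                (pow_nonneg hε0 k)
      have hmain : 2 * (h2 ^ (k + 1) / ((k:ℝ) + 1))
          ≤ ε ^ k / ((k:ℝ) + 1) * ∫ x in z..z', |x| ^ k := by
        rw [show (2 : ℝ) * (h2 ^ (k + 1) / ((k:ℝ) + 1)) = 2 * h2 ^ (k + 1) / ((k:ℝ) + 1) by ring,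
          show ε ^ k / ((k:ℝ) + 1) * (∫ x in z..z', |x| ^ k)
            = ε ^ k * (∫ x in z..z', |x| ^ k) / ((k:ℝ) + 1) by ring]
        exact (div_le_div_iff_of_pos_right hkpos).2 h2'
      rw [hT, hB1, hB2, add_zero, add_zero, hgIoo]
      exact hIle.trans (hIoo.le.trans hmain)
    · have hT : T p = 0 := by
        show ε ^ k / ((k:ℝ) + 1) * (∫ x in (if a ≤ z ∧ z' ≤ b then Set.Ioo z z' else ∅), g x) = 0
        simp only [T, s', if_neg hin, Measure.restrict_empty, integral_zero_measure, mul_zero]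
      have hbnd : ∀ c : ℝ, c ∈ Set.Ioo z z' →
          2 * (h2 ^ (k + 1) / ((k:ℝ) + 1))
            ≤ 2 / ((k:ℝ) + 1) * (ε / (1 - ε)) ^ (k + 1) * |c| ^ (k + 1) := by
        intro c hc
        have hcm1 : m - c ≤ h2 := by rw [hm, hh2def]; have := hc.1; linarith
        have hcm2 : c - m ≤ h2 := by rw [hm, hh2def]; have := hc.2; linarith
        have h2m : |m| ≤ |c| + h2 := by
          have := abs_sub_abs_le_abs_sub m c
          have habs : |m - c| ≤ h2 := abs_le.2 ⟨by linarith, hcm1⟩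
          linarith
        have h4 : |m| ≤ |c| / (1 - ε) := by
          rw [le_div_iff₀ hε1']
          nlinarith [hh2e]
        have h5 : h2 ≤ ε / (1 - ε) * |c| := by
          calc h2 ≤ ε * |m| := hh2e
            _ ≤ ε * (|c| / (1 - ε)) := mul_le_mul_of_nonneg_left h4 hε0
            _ = ε / (1 - ε) * |c| := by ring
        have h6 : h2 ^ (k + 1) ≤ (ε / (1 - ε)) ^ (k + 1) * |c| ^ (k + 1) := by
          rw [← mul_pow]
          exact pow_le_pow_left₀ hh2pos.le h5 (k + 1)
        calc 2 * (h2 ^ (k + 1) / ((k:ℝ) + 1)) = 2 / ((k:ℝ) + 1) * h2 ^ (k + 1) := by ring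
          _ ≤ 2 / ((k:ℝ) + 1) * ((ε / (1 - ε)) ^ (k + 1) * |c| ^ (k + 1)) :=
              mul_le_mul_of_nonneg_left h6 (by positivity)
          _ = 2 / ((k:ℝ) + 1) * (ε / (1 - ε)) ^ (k + 1) * |c| ^ (k + 1) := by ring
      have hB1nn : 0 ≤ B1 p := by
        simp only [B1]; split
        · exact hA0
        · exact le_rfl
      have hB2nn : 0 ≤ B2 p := by
        simp only [B2]; split
        · exact hB0
        · exact le_rfl
      rcases not_and_or.1 hin with hza | hz'b
      · push_neg at hza
        have hamem : a ∈ Set.Ioo z z' := hmema p hza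
        have hle : (∫ x in s p, f x) ≤ A := by
          rw [hAdef]
          exact hIle.trans (hIoo.le.trans (hbnd a hamem))
        have hB1 : B1 p = A := if_pos hza
        rw [hT, hB1, zero_add]
        linarith
      · push_neg at hz'b
        have hbmem : b ∈ Set.Ioo z z' := hmemb p hz'b
        have hle : (∫ x in s p, f x) ≤ B := by
          rw [hBdef]
          exact hIle.trans (hIoo.le.trans (hbnd b hbmem))
        have hB2 : B2 p = B := if_pos hz'b
        rw [hT, hB2, zero_add]
        linarith
  -- summing up
  have hsmeas : ∀ p : ι, MeasurableSet (s p) :=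
    fun p => measurableSet_Ioo.inter measurableSet_Ioo
  have hUint : IntegrableOn f (⋃ p : ι, s p) :=
    hfint.mono_set (by rw [← hcover]; exact Set.diff_subset)
  have HI : HasSum (fun p : ι => ∫ x in s p, f x) (∫ x in Set.Ioo a b \ F, f x) := by
    rw [hcover]
    exact hasSum_integral_iUnion hsmeas hsdisj hUint
  have hLHS : (∫ x in a..b, f x) = ∫ x in Set.Ioo a b \ F, f x := by
    rw [intervalIntegral.integral_of_le hab, MeasureTheory.integral_Ioc_eq_integral_Ioo,
      ← MeasureTheory.integral_inter_add_diff hF_closed.measurableSet hfint]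
    have hfF : Set.EqOn f (fun _ => (0:ℝ)) (Set.Ioo a b ∩ F) := by
      intro x hx
      have h0 : |rd x - x| = 0 := by
        rw [hrd_near x, flF_eq_self hF_closed hF_below hx.2,
          ceF_eq_self hF_closed hF_above hx.2]
        simp
      simp only [hf, h0]
      exact zero_pow (by omega)
    rw [setIntegral_congr_fun (measurableSet_Ioo.inter hF_closed.measurableSet) hfF,
      integral_zero, zero_add]
  have hgU : IntegrableOn g (⋃ p : ι, s' p) := hgint.mono_set (Set.iUnion_subset hs'sub)
  have HT : HasSum (fun p : ι => ∫ x in s' p, g x) (∫ x in ⋃ p : ι, s' p, g x) :=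
    hasSum_integral_iUnion hs'meas hs'disj hgU
  have HTsum : HasSum T (ε ^ k / ((k:ℝ) + 1) * ∫ x in ⋃ p : ι, s' p, g x) := HT.mul_left _
  have hTle : (∫ x in ⋃ p : ι, s' p, g x) ≤ ∫ x in Set.Ioo a b, g x :=
    setIntegral_mono_set hgint (Filter.Eventually.of_forall hg0)
      (HasSubset.Subset.eventuallyLE (Set.iUnion_subset hs'sub))
  have hB1s : Summable B1 ∧ (∑' p, B1 p) ≤ A := by
    by_cases hex : ∃ p : ι, p.1.1 < a
    · obtain ⟨p₀, hp₀⟩ := hex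
      have huniq : ∀ q : ι, q ≠ p₀ → B1 q = 0 := by
        intro q hq
        simp only [B1]
        rw [if_neg]
        intro hqa
        apply hq
        obtain ⟨e1, e2⟩ := cells_eq q.2.1 q.2.2.1 p₀.2.1 p₀.2.2.1 q.2.2.2.2.1 p₀.2.2.2.2.1
          (hmema q hqa) (hmema p₀ hp₀)
        exact Subtype.ext (Prod.ext e1 e2)
      refine ⟨summable_of_ne_finset_zero (s := {p₀}) (fun q hq => huniq q (by simpa using hq)), ?_⟩
      rw [tsum_eq_single p₀ huniq]
      simp only [B1, if_pos hp₀]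
      exact le_rfl
    · push_neg at hex
      have hz : B1 = fun _ => 0 := funext fun q => if_neg (not_lt.2 (hex q))
      rw [hz]
      exact ⟨summable_zero, by rw [tsum_zero]; exact hA0⟩
  have hB2s : Summable B2 ∧ (∑' p, B2 p) ≤ B := by
    by_cases hex : ∃ p : ι, b < p.1.2
    · obtain ⟨p₀, hp₀⟩ := hex
      have huniq : ∀ q : ι, q ≠ p₀ → B2 q = 0 := by
        intro q hq
        simp only [B2]
        rw [if_neg]
        intro hqb
        apply hq
        obtain ⟨e1, e2⟩ := cells_eq q.2.1 q.2.2.1 p₀.2.1 p₀.2.2.1 q.2.2.2.2.1 p₀.2.2.2.2.1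
          (hmemb q hqb) (hmemb p₀ hp₀)
        exact Subtype.ext (Prod.ext e1 e2)
      refine ⟨summable_of_ne_finset_zero (s := {p₀}) (fun q hq => huniq q (by simpa using hq)), ?_⟩
      rw [tsum_eq_single p₀ huniq]
      simp only [B2, if_pos hp₀]
      exact le_rfl
    · push_neg at hex
      have hz : B2 = fun _ => 0 := funext fun q => if_neg (not_lt.2 (hex q))
      rw [hz]
      exact ⟨summable_zero, by rw [tsum_zero]; exact hB0⟩
  have hTBsum : Summable (fun p => T p + B1 p + B2 p) :=
    (HTsum.summable.add hB1s.1).add hB2s.1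
  have hgab : (∫ x in Set.Ioo a b, g x) = ∫ x in a..b, |x| ^ k := by
    rw [intervalIntegral.integral_of_le hab, MeasureTheory.integral_Ioc_eq_integral_Ioo]
  have hfinal : (∫ x in Set.Ioo a b \ F, f x)
      ≤ ε ^ k / ((k:ℝ) + 1) * (∫ x in a..b, |x| ^ k) + (A + B) := by
    rw [← HI.tsum_eq]
    have step1 : (∑' p, ∫ x in s p, f x) ≤ ∑' p, (T p + B1 p + B2 p) :=
      Summable.tsum_le_tsum key HI.summable hTBsum
    have step2 : (∑' p, (T p + B1 p + B2 p)) = (∑' p, T p) + (∑' p, B1 p) + (∑' p, B2 p) := by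
      rw [Summable.tsum_add (HTsum.summable.add hB1s.1) hB2s.1, Summable.tsum_add HTsum.summable hB1s.1]
    have step3 : (∑' p, T p) ≤ ε ^ k / ((k:ℝ) + 1) * ∫ x in a..b, |x| ^ k := by
      rw [HTsum.tsum_eq, ← hgab]
      exact mul_le_mul_of_nonneg_left hTle (by positivity)
    calc (∑' p, ∫ x in s p, f x) ≤ (∑' p, T p) + (∑' p, B1 p) + (∑' p, B2 p) := by
          rw [← step2]; exact step1
      _ ≤ ε ^ k / ((k:ℝ) + 1) * (∫ x in a..b, |x| ^ k) + (A + B) := by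
          have := add_le_add (add_le_add step3 hB1s.2) hB2s.2
          linarith
  rw [hLHS]
  refine hfinal.trans ?_
  rw [hAdef, hBdef]
  have : (2:ℝ) / ((k:ℝ) + 1) * (ε / (1 - ε)) ^ (k + 1) * |a| ^ (k + 1)
      + 2 / ((k:ℝ) + 1) * (ε / (1 - ε)) ^ (k + 1) * |b| ^ (k + 1)
      = 2 / ((k:ℝ) + 1) * (|a| ^ (k + 1) + |b| ^ (k + 1)) * (ε / (1 - ε)) ^ (k + 1) := by
    ring
  linarith
end

section
/- Let f : ℝ → ℝ be nonnegative, lower semicontinuous, and Lebesgue integrable, and suppose there exists x* ∈ ℝ such that f is nondecreasing on (−∞, x*] and nonincreasing on [x*, ∞). Then for every integer k ≥ 1, ∫_ℝ f(x)·|err(x)|^k dx ≤ (δ^k/(k+1)) · ∫_ℝ f(x) dx + (4/(k+1)) · f(x*) · δ^{k+1}. -/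
open MeasureTheory

/-- Distance from `x` to the nearest point of `F`. -/
noncomputable def dF (F : Set ℝ) (x : ℝ) : ℝ := min (x - flF F x) (ceF F x - x)

section Aux
variable {F : Set ℝ}

lemma flF_spec (hF_closed : IsClosed F) (hF_below : ∀ x : ℝ, ∃ z ∈ F, z ≤ x) (x : ℝ) :
    flF F x ∈ F ∧ flF F x ≤ x := by
  obtain ⟨z, hzF, hzx⟩ := hF_below x
  have h := (hF_closed.inter isClosed_Iic).csSup_mem ⟨z, hzF, hzx⟩ ⟨x, fun y hy => hy.2⟩
  exact ⟨h.1, h.2⟩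

lemma le_flF {z x : ℝ} (hz : z ∈ F) (hzx : z ≤ x) : z ≤ flF F x :=
  le_csSup ⟨x, fun y hy => hy.2⟩ ⟨hz, hzx⟩

lemma ceF_spec (hF_closed : IsClosed F) (hF_above : ∀ x : ℝ, ∃ z ∈ F, x ≤ z) (x : ℝ) :
    ceF F x ∈ F ∧ x ≤ ceF F x := by
  obtain ⟨z, hzF, hzx⟩ := hF_above x
  have h := (hF_closed.inter isClosed_Ici).csInf_mem ⟨z, hzF, hzx⟩ ⟨x, fun y hy => hy.2⟩
  exact ⟨h.1, h.2⟩

lemma ceF_le {z x : ℝ} (hz : z ∈ F) (hxz : x ≤ z) : ceF F x ≤ z :=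
  csInf_le ⟨x, fun y hy => hy.2⟩ ⟨hz, hxz⟩

lemma dF_nonneg (hF_closed : IsClosed F) (hF_below : ∀ x : ℝ, ∃ z ∈ F, z ≤ x)
    (hF_above : ∀ x : ℝ, ∃ z ∈ F, x ≤ z) (x : ℝ) : 0 ≤ dF F x := by
  have h1 := (flF_spec hF_closed hF_below x).2
  have h2 := (ceF_spec hF_closed hF_above x).2
  simp only [dF, le_min_iff]
  constructor <;> linarith

lemma dF_le_left {a x : ℝ} (ha : a ∈ F) (hax : a ≤ x) : dF F x ≤ x - a := by
  have := le_flF ha hax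
  calc dF F x ≤ x - flF F x := min_le_left _ _
    _ ≤ x - a := by linarith

lemma dF_le_right {c x : ℝ} (hc : c ∈ F) (hxc : x ≤ c) : dF F x ≤ c - x := by
  have := ceF_le hc hxc
  calc dF F x ≤ ceF F x - x := min_le_right _ _
    _ ≤ c - x := by linarith

lemma dF_le_delta {δ : ℝ} (hgap : ∀ x : ℝ, ceF F x - flF F x ≤ 2 * δ) (x : ℝ) :
    dF F x ≤ δ := by
  have := hgap x
  rcases le_total (x - flF F x) (ceF F x - x) with h | h
  · simp only [dF, min_eq_left h]; linarith
  · simp only [dF, min_eq_right h]; linarith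

lemma monotone_flF (hF_below : ∀ x : ℝ, ∃ z ∈ F, z ≤ x) : Monotone (flF F) := by
  intro x y hxy
  obtain ⟨z, hzF, hzx⟩ := hF_below x
  exact csSup_le_csSup ⟨y, fun u hu => hu.2⟩ ⟨z, hzF, hzx⟩
    (Set.inter_subset_inter_right _ (Set.Iic_subset_Iic.2 hxy))

lemma monotone_ceF (hF_above : ∀ x : ℝ, ∃ z ∈ F, x ≤ z) : Monotone (ceF F) := by
  intro x y hxy
  obtain ⟨z, hzF, hzy⟩ := hF_above y
  exact csInf_le_csInf ⟨x, fun u hu => hu.2⟩ ⟨z, hzF, hzy⟩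
    (Set.inter_subset_inter_right _ (Set.Ici_subset_Ici.2 hxy))

lemma measurable_dF (hF_below : ∀ x : ℝ, ∃ z ∈ F, z ≤ x)
    (hF_above : ∀ x : ℝ, ∃ z ∈ F, x ≤ z) : Measurable (dF F) :=
  (measurable_id.sub (monotone_flF hF_below).measurable).min
    ((monotone_ceF hF_above).measurable.sub measurable_id)

lemma dk_ii (hF_closed : IsClosed F) (hF_below : ∀ x : ℝ, ∃ z ∈ F, z ≤ x)
    (hF_above : ∀ x : ℝ, ∃ z ∈ F, x ≤ z) {δ : ℝ} (hgap : ∀ x : ℝ, ceF F x - flF F x ≤ 2 * δ)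
    (k : ℕ) (p q : ℝ) : IntervalIntegrable (fun x => dF F x ^ k) volume p q := by
  rw [intervalIntegrable_iff]
  apply Measure.integrableOn_of_bounded (M := δ ^ k)
  · exact (measure_mono Set.uIoc_subset_uIcc |>.trans_lt (measure_Icc_lt_top)).ne
  · exact ((measurable_dF hF_below hF_above).pow_const k).aestronglyMeasurable
  · apply ae_of_all
    intro x
    have h0 := dF_nonneg hF_closed hF_below hF_above x
    rw [Real.norm_eq_abs, abs_of_nonneg (pow_nonneg h0 k)]
    exact pow_le_pow_left₀ h0 (dF_le_delta hgap x) k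

lemma min_int {k : ℕ} {p q : ℝ} (hpq : p ≤ q) :
    ∫ x in p..q, min (x - p) (q - x) ^ k ≤ 2 * ((q - p) / 2) ^ (k + 1) / (k + 1) := by
  set m := (p + q) / 2 with hm
  have hpm : p ≤ m := by rw [hm]; linarith
  have hmq : m ≤ q := by rw [hm]; linarith
  have hcont : Continuous fun x : ℝ => min (x - p) (q - x) ^ k :=
    (((continuous_id.sub continuous_const).min (continuous_const.sub continuous_id)).pow k)
  have h1 : ∫ x in p..m, min (x - p) (q - x) ^ k ≤ ∫ x in p..m, (x - p) ^ k := by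
    apply intervalIntegral.integral_mono_on hpm (hcont.intervalIntegrable _ _)
      (((continuous_id.sub continuous_const).pow k).intervalIntegrable _ _)
    intro x hx
    have h0 : (0:ℝ) ≤ min (x - p) (q - x) := le_min (by linarith [hx.1]) (by linarith [hx.2])
    exact pow_le_pow_left₀ h0 (min_le_left _ _) k
  have h2 : ∫ x in m..q, min (x - p) (q - x) ^ k ≤ ∫ x in m..q, (q - x) ^ k := by
    apply intervalIntegral.integral_mono_on hmq (hcont.intervalIntegrable _ _)
      (((continuous_const.sub continuous_id).pow k).intervalIntegrable _ _)
    intro x hx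
    have h0 : (0:ℝ) ≤ min (x - p) (q - x) := le_min (by linarith [hx.1]) (by linarith [hx.2])
    exact pow_le_pow_left₀ h0 (min_le_right _ _) k
  have e1 : ∫ x in p..m, (x - p) ^ k = (m - p) ^ (k + 1) / (k + 1) := by
    rw [intervalIntegral.integral_comp_sub_right (fun x => x ^ k) p, sub_self,
      integral_pow, zero_pow (Nat.succ_ne_zero k), sub_zero]
  have e2 : ∫ x in m..q, (q - x) ^ k = (q - m) ^ (k + 1) / (k + 1) := by
    rw [intervalIntegral.integral_comp_sub_left (fun x => x ^ k) q, sub_self,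
      integral_pow, zero_pow (Nat.succ_ne_zero k), sub_zero]
  have hsplit : ∫ x in p..q, min (x - p) (q - x) ^ k
      = (∫ x in p..m, min (x - p) (q - x) ^ k) + ∫ x in m..q, min (x - p) (q - x) ^ k :=
    (intervalIntegral.integral_add_adjacent_intervals (hcont.intervalIntegrable _ _)
      (hcont.intervalIntegrable _ _)).symm
  have hmp : m - p = (q - p) / 2 := by rw [hm]; ring
  have hqm : q - m = (q - p) / 2 := by rw [hm]; ring
  rw [hsplit]
  calc (∫ x in p..m, min (x - p) (q - x) ^ k) + ∫ x in m..q, min (x - p) (q - x) ^ k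
      ≤ (m - p) ^ (k + 1) / (k + 1) + (q - m) ^ (k + 1) / (k + 1) := by
        rw [← e1, ← e2]; exact add_le_add h1 h2
    _ = 2 * ((q - p) / 2) ^ (k + 1) / (k + 1) := by rw [hmp, hqm]; ring

lemma step_bound (hF_closed : IsClosed F) (hF_below : ∀ x : ℝ, ∃ z ∈ F, z ≤ x)
    (hF_above : ∀ x : ℝ, ∃ z ∈ F, x ≤ z) {δ : ℝ} (hδ : 0 < δ)
    (hgap : ∀ x : ℝ, ceF F x - flF F x ≤ 2 * δ) {k : ℕ}
    {p q : ℝ} (hp : p ∈ F) (hq : q ∈ F) (hpq : p ≤ q) (hw : q - p ≤ 2 * δ) :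
    ((k:ℝ) + 1) * ∫ x in p..q, dF F x ^ k ≤ δ ^ k * (q - p) := by
  have hcont : Continuous fun x : ℝ => min (x - p) (q - x) ^ k :=
    (((continuous_id.sub continuous_const).min (continuous_const.sub continuous_id)).pow k)
  have hmono : ∫ x in p..q, dF F x ^ k ≤ ∫ x in p..q, min (x - p) (q - x) ^ k := by
    apply intervalIntegral.integral_mono_on hpq
      (dk_ii hF_closed hF_below hF_above hgap k p q) (hcont.intervalIntegrable _ _)
    intro x hx
    exact pow_le_pow_left₀ (dF_nonneg hF_closed hF_below hF_above x)
      (le_min (dF_le_left hp hx.1) (dF_le_right hq hx.2)) k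
  have hmi := min_int (k := k) hpq
  have hk1 : (0:ℝ) < (k:ℝ) + 1 := by positivity
  have hh : (0:ℝ) ≤ (q - p) / 2 := by linarith
  have hpow : ((q - p) / 2) ^ k ≤ δ ^ k := pow_le_pow_left₀ hh (by linarith) k
  have key : ((k:ℝ) + 1) * (2 * ((q - p) / 2) ^ (k + 1) / ((k:ℝ) + 1)) ≤ δ ^ k * (q - p) := by
    rw [mul_div_cancel₀ _ (ne_of_gt hk1), pow_succ]
    calc 2 * (((q - p) / 2) ^ k * ((q - p) / 2)) = ((q - p) / 2) ^ k * (q - p) := by ring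
      _ ≤ δ ^ k * (q - p) := by nlinarith
  calc ((k:ℝ) + 1) * ∫ x in p..q, dF F x ^ k
      ≤ ((k:ℝ) + 1) * ∫ x in p..q, min (x - p) (q - x) ^ k := by nlinarith
    _ ≤ ((k:ℝ) + 1) * (2 * ((q - p) / 2) ^ (k + 1) / ((k:ℝ) + 1)) := by nlinarith
    _ ≤ δ ^ k * (q - p) := key

lemma core (hF_closed : IsClosed F) (hF_below : ∀ x : ℝ, ∃ z ∈ F, z ≤ x)
    (hF_above : ∀ x : ℝ, ∃ z ∈ F, x ≤ z) {δ : ℝ} (hδ : 0 < δ)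
    (hgap : ∀ x : ℝ, ceF F x - flF F x ≤ 2 * δ) {k : ℕ}
    {a b : ℝ} (ha : a ∈ F) (hb : b ∈ F) (hab : a ≤ b) :
    ((k:ℝ) + 1) * ∫ x in a..b, dF F x ^ k ≤ δ ^ k * (b - a) := by
  set g : ℝ → ℝ := fun y => ∫ x in a..y, dF F x ^ k with hg
  have hgc : Continuous g :=
    intervalIntegral.continuous_primitive (fun p q => dk_ii hF_closed hF_below hF_above hgap k p q) a
  set S : Set ℝ := F ∩ Set.Icc a b ∩ {y | ((k:ℝ) + 1) * g y ≤ δ ^ k * (y - a)} with hS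
  have hSclosed : IsClosed S :=
    (hF_closed.inter isClosed_Icc).inter
      (isClosed_le (continuous_const.mul hgc) (continuous_const.mul (continuous_id.sub continuous_const)))
  have haS : a ∈ S := by
    refine ⟨⟨ha, le_refl a, hab⟩, ?_⟩
    simp [hg, intervalIntegral.integral_same]
  have hbddS : BddAbove S := ⟨b, fun y hy => hy.1.2.2⟩
  have hcS : sSup S ∈ S := hSclosed.csSup_mem ⟨a, haS⟩ hbddS
  set c := sSup S with hc
  obtain ⟨⟨hcF, hac, hcb⟩, hPc⟩ := hcS
  simp only [Set.mem_setOf_eq] at hPc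
  have hmain : b ≤ c := by
    by_contra hlt
    push_neg at hlt
    have hext : ∀ q, q ∈ F → c < q → q ≤ b → q - c ≤ 2 * δ → False := by
      intro q hqF hcq hqb hq2δ
      have hstep := step_bound hF_closed hF_below hF_above hδ hgap (k := k) hcF hqF hcq.le hq2δ
      have hsum : g q = g c + ∫ x in c..q, dF F x ^ k := by
        rw [hg]
        exact (intervalIntegral.integral_add_adjacent_intervals
          (dk_ii hF_closed hF_below hF_above hgap k a c)
          (dk_ii hF_closed hF_below hF_above hgap k c q)).symm
      have hqS : q ∈ S := by
        refine ⟨⟨hqF, le_trans hac hcq.le, hqb⟩, ?_⟩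
        simp only [Set.mem_setOf_eq]
        rw [hsum, mul_add]
        have : δ ^ k * (c - a) + δ ^ k * (q - c) = δ ^ k * (q - a) := by ring
        linarith [hPc, hstep]
      exact absurd (le_csSup hbddS hqS) (not_le.2 hcq)
    have hcτ' : c < min b (c + δ) := lt_min hlt (by linarith)
    have hτb : min b (c + δ) ≤ b := min_le_left _ _
    have hy₀F := (flF_spec hF_closed hF_below (min b (c + δ))).1
    have hy₀τ := (flF_spec hF_closed hF_below (min b (c + δ))).2
    have hcy₀ : c ≤ flF F (min b (c + δ)) := le_flF hcF hcτ'.le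
    by_cases hy : c < flF F (min b (c + δ))
    · refine hext _ hy₀F hy (le_trans hy₀τ hτb) ?_
      have h1 : min b (c + δ) ≤ c + δ := min_le_right _ _
      linarith [hy₀τ]
    · have hy₀c : flF F (min b (c + δ)) = c := le_antisymm (not_lt.1 hy) hcy₀
      have hqF := (ceF_spec hF_closed hF_above (min b (c + δ))).1
      have hτq := (ceF_spec hF_closed hF_above (min b (c + δ))).2
      have hqb : ceF F (min b (c + δ)) ≤ b := ceF_le hb hτb
      have hq2δ : ceF F (min b (c + δ)) - c ≤ 2 * δ := by
        have := hgap (min b (c + δ))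
        rw [hy₀c] at this
        exact this
      exact hext _ hqF (lt_of_lt_of_le hcτ' hτq) hqb hq2δ
  have hcb' : c = b := le_antisymm hcb hmain
  rw [hcb'] at hPc
  exact hPc

lemma piece (hF_closed : IsClosed F) (hF_below : ∀ x : ℝ, ∃ z ∈ F, z ≤ x)
    (hF_above : ∀ x : ℝ, ∃ z ∈ F, x ≤ z) {δ : ℝ} (hδ : 0 < δ)
    (hgap : ∀ x : ℝ, ceF F x - flF F x ≤ 2 * δ) {k : ℕ}
    {p q α' β' : ℝ} (hp : p ∈ F) (hq : q ∈ F) (hw : q - p ≤ 2 * δ)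
    (h1 : p ≤ α') (h2 : α' ≤ β') (h3 : β' ≤ q) :
    ((k:ℝ) + 1) * ∫ x in α'..β', dF F x ^ k ≤ 2 * δ ^ (k + 1) := by
  have hpq : p ≤ q := by linarith
  have hk1 : (0:ℝ) < (k:ℝ) + 1 := by positivity
  have hcont : Continuous fun x : ℝ => min (x - p) (q - x) ^ k :=
    (((continuous_id.sub continuous_const).min (continuous_const.sub continuous_id)).pow k)
  have hsub : ∫ x in α'..β', dF F x ^ k ≤ ∫ x in p..q, dF F x ^ k :=
    intervalIntegral.integral_mono_interval h1 h2 h3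
      (ae_of_all _ fun x => pow_nonneg (dF_nonneg hF_closed hF_below hF_above x) k)
      (dk_ii hF_closed hF_below hF_above hgap k p q)
  have hmono : ∫ x in p..q, dF F x ^ k ≤ ∫ x in p..q, min (x - p) (q - x) ^ k := by
    apply intervalIntegral.integral_mono_on hpq
      (dk_ii hF_closed hF_below hF_above hgap k p q) (hcont.intervalIntegrable _ _)
    intro x hx
    exact pow_le_pow_left₀ (dF_nonneg hF_closed hF_below hF_above x)
      (le_min (dF_le_left hp hx.1) (dF_le_right hq hx.2)) k
  have hmi := min_int (k := k) hpq
  have hpow : ((q - p) / 2) ^ (k + 1) ≤ δ ^ (k + 1) :=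
    pow_le_pow_left₀ (by linarith) (by linarith) _
  have key : ((k:ℝ) + 1) * (2 * ((q - p) / 2) ^ (k + 1) / ((k:ℝ) + 1)) ≤ 2 * δ ^ (k + 1) := by
    rw [mul_div_cancel₀ _ (ne_of_gt hk1)]
    linarith
  calc ((k:ℝ) + 1) * ∫ x in α'..β', dF F x ^ k
      ≤ ((k:ℝ) + 1) * ∫ x in p..q, min (x - p) (q - x) ^ k := by nlinarith
    _ ≤ ((k:ℝ) + 1) * (2 * ((q - p) / 2) ^ (k + 1) / ((k:ℝ) + 1)) := by nlinarith
    _ ≤ 2 * δ ^ (k + 1) := key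

lemma interval_bound (hF_closed : IsClosed F) (hF_below : ∀ x : ℝ, ∃ z ∈ F, z ≤ x)
    (hF_above : ∀ x : ℝ, ∃ z ∈ F, x ≤ z) {δ : ℝ} (hδ : 0 < δ)
    (hgap : ∀ x : ℝ, ceF F x - flF F x ≤ 2 * δ) {k : ℕ}
    {α β : ℝ} (hαβ : α ≤ β) :
    ((k:ℝ) + 1) * ∫ x in α..β, dF F x ^ k
      ≤ δ ^ k * (β - α) + 4 * δ ^ (k + 1) := by
  have hk1 : (0:ℝ) < (k:ℝ) + 1 := by positivity
  have hδk : (0:ℝ) ≤ δ ^ k := le_of_lt (pow_pos hδ k)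
  have hδk1 : (0:ℝ) < δ ^ (k + 1) := pow_pos hδ _
  have haF := (ceF_spec hF_closed hF_above α).1
  have hαa := (ceF_spec hF_closed hF_above α).2
  have hflα := (flF_spec hF_closed hF_below α)
  have hbF := (flF_spec hF_closed hF_below β).1
  have hbβ := (flF_spec hF_closed hF_below β).2
  have hceβ := (ceF_spec hF_closed hF_above β)
  rcases le_or_gt (ceF F α) (flF F β) with hab | hba
  · have haβ : ceF F α ≤ β := le_trans hab hbβ
    have sp1 : ∫ x in α..β, dF F x ^ k
        = (∫ x in α..(ceF F α), dF F x ^ k) + ∫ x in (ceF F α)..β, dF F x ^ k :=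
      (intervalIntegral.integral_add_adjacent_intervals
        (dk_ii hF_closed hF_below hF_above hgap k _ _)
        (dk_ii hF_closed hF_below hF_above hgap k _ _)).symm
    have sp2 : ∫ x in (ceF F α)..β, dF F x ^ k
        = (∫ x in (ceF F α)..(flF F β), dF F x ^ k) + ∫ x in (flF F β)..β, dF F x ^ k :=
      (intervalIntegral.integral_add_adjacent_intervals
        (dk_ii hF_closed hF_below hF_above hgap k _ _)
        (dk_ii hF_closed hF_below hF_above hgap k _ _)).symm
    have p1 : ((k:ℝ) + 1) * ∫ x in α..(ceF F α), dF F x ^ k ≤ 2 * δ ^ (k + 1) :=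
      piece hF_closed hF_below hF_above hδ hgap hflα.1 haF (hgap α) hflα.2 hαa le_rfl
    have p2 : ((k:ℝ) + 1) * ∫ x in (flF F β)..β, dF F x ^ k ≤ 2 * δ ^ (k + 1) :=
      piece hF_closed hF_below hF_above hδ hgap hbF hceβ.1 (hgap β) le_rfl hbβ hceβ.2
    have pm : ((k:ℝ) + 1) * ∫ x in (ceF F α)..(flF F β), dF F x ^ k ≤ δ ^ k * (β - α) := by
      have h := core hF_closed hF_below hF_above hδ hgap (k := k) haF hbF hab
      have hle : δ ^ k * (flF F β - ceF F α) ≤ δ ^ k * (β - α) := by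
        apply mul_le_mul_of_nonneg_left _ hδk
        linarith
      linarith
    rw [sp1, sp2, mul_add, mul_add]
    linarith
  · have hβa : β ≤ ceF F α := by
      by_contra h
      push_neg at h
      have : ceF F α ≤ flF F β := le_flF haF h.le
      linarith
    have hp := piece hF_closed hF_below hF_above hδ hgap (k := k) hflα.1 haF (hgap α)
      hflα.2 hαβ hβa
    nlinarith

end Aux

theorem unimodal_error_int_abs
    (F : Set ℝ) (hF_closed : IsClosed F) (hF_ne : F.Nonempty)
    (hF_below : ∀ x : ℝ, ∃ z ∈ F, z ≤ x) (hF_above : ∀ x : ℝ, ∃ z ∈ F, x ≤ z)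
    (rd : ℝ → ℝ) (hrd_meas : Measurable rd)
    (hrd_mem : ∀ x : ℝ, rd x = flF F x ∨ rd x = ceF F x)
    (hrd_near : ∀ x : ℝ, |rd x - x| = min (x - flF F x) (ceF F x - x))
    (δ : ℝ) (hδ : 0 < δ) (hgap : ∀ x : ℝ, ceF F x - flF F x ≤ 2 * δ)
    (f : ℝ → ℝ) (hf_nonneg : ∀ x, 0 ≤ f x) (hf_lsc : LowerSemicontinuous f)
    (hf_int : Integrable f)
    (xstar : ℝ) (hf_mono : MonotoneOn f (Set.Iic xstar))
    (hf_anti : AntitoneOn f (Set.Ici xstar))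
    (k : ℕ) (hk : 1 ≤ k) :
    (∫ x, f x * |rd x - x| ^ k)
      ≤ (δ ^ k / (k + 1)) * (∫ x, f x) + (4 / (k + 1)) * f xstar * δ ^ (k + 1) := by
  classical
  have hk1 : (0:ℝ) < (k:ℝ) + 1 := by positivity
  set w : ℝ → ℝ := fun x => dF F x ^ k with hwdef
  have hw_meas : Measurable w := (measurable_dF hF_below hF_above).pow_const k
  have hw_nonneg : ∀ x, 0 ≤ w x := fun x =>
    pow_nonneg (dF_nonneg hF_closed hF_below hF_above x) k
  set W : ℝ → ENNReal := fun x => ENNReal.ofReal (w x) with hWdef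
  have hW_meas : Measurable W := ENNReal.measurable_ofReal.comp hw_meas
  set ν : Measure ℝ := volume.withDensity W with hν
  set M := f xstar with hM
  have hM0 : 0 ≤ M := hf_nonneg xstar
  have hfM : ∀ x, f x ≤ M := by
    intro x
    rcases le_total x xstar with h | h
    · exact hf_mono h (le_refl xstar) h
    · exact hf_anti (le_refl xstar) h h
  set C1 : ENNReal := ENNReal.ofReal (δ ^ k / ((k:ℝ) + 1)) with hC1
  set C2 : ENNReal := ENNReal.ofReal (4 * δ ^ (k + 1) / ((k:ℝ) + 1)) with hC2
  -- rewrite LHS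
  have hLHS : (∫ x, f x * |rd x - x| ^ k)
      = (∫⁻ x, ENNReal.ofReal (f x * w x)).toReal := by
    have he : (fun x => f x * |rd x - x| ^ k) = fun x => f x * w x := by
      funext x; rw [hrd_near x]; rfl
    rw [he]
    exact integral_eq_lintegral_of_nonneg_ae
      (ae_of_all _ fun x => mul_nonneg (hf_nonneg x) (hw_nonneg x))
      (hf_int.aestronglyMeasurable.mul hw_meas.aestronglyMeasurable)
  have hT1 : ∫⁻ x, ENNReal.ofReal (f x) ∂ν = ∫⁻ x, ENNReal.ofReal (f x * w x) := by
    rw [hν, lintegral_withDensity_eq_lintegral_mul_non_measurable volume hW_meas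
      (ae_of_all _ fun x => ENNReal.ofReal_lt_top)]
    apply lintegral_congr
    intro x
    simp only [Pi.mul_apply, hWdef]
    rw [← ENNReal.ofReal_mul (hw_nonneg x), mul_comm (w x) (f x)]
  have hf_aemeas_ν : AEMeasurable f ν :=
    hf_int.aemeasurable.mono_ac (withDensity_absolutelyContinuous _ _)
  have hlc : ∫⁻ x, ENNReal.ofReal (f x) ∂ν = ∫⁻ t in Set.Ioi (0:ℝ), ν {a | t < f a} :=
    lintegral_eq_lintegral_meas_lt ν (ae_of_all _ hf_nonneg) hf_aemeas_ν
  -- key pointwise bound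
  have key : ∀ t ∈ Set.Ioi (0:ℝ), ν {a | t < f a}
      ≤ C1 * volume {a | t < f a} + (Set.Ioc (0:ℝ) M).indicator (fun _ => C2) t := by
    intro t ht
    rw [Set.mem_Ioi] at ht
    by_cases htM : t < M
    · set S : Set ℝ := {a | t < f a} with hSdef
      have hxS : xstar ∈ S := htM
      have hord : ∀ u ∈ S, ∀ v ∈ S, Set.Icc u v ⊆ S := by
        intro u hu v hv z hz
        rcases le_total z xstar with hzx | hzx
        · exact lt_of_lt_of_le hu (hf_mono (le_trans hz.1 hzx) hzx hz.1)
        · exact lt_of_lt_of_le hv (hf_anti hzx (le_trans hzx hz.2) hz.2)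
      have hfin : volume S ≠ ⊤ := by
        have hsub : S ⊆ {a | t ≤ f a} := fun a ha => show t ≤ f a from le_of_lt ha
        exact ((measure_mono hsub).trans_lt (hf_int.measure_ge_lt_top ht)).ne
      have hbddA : BddAbove S := by
        by_contra hno
        have hsub : Set.Ici xstar ⊆ S := by
          intro y hy
          rcases not_bddAbove_iff.1 hno y with ⟨v, hvS, hyv⟩
          exact hord xstar hxS v hvS ⟨hy, hyv.le⟩
        exact hfin (measure_mono_top hsub Real.volume_Ici)
      have hbddB : BddBelow S := by
        by_contra hno
        have hsub : Set.Iic xstar ⊆ S := by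
          intro y hy
          rcases not_bddBelow_iff.1 hno y with ⟨u, huS, huy⟩
          exact hord u huS xstar hxS ⟨huy.le, hy⟩
        exact hfin (measure_mono_top hsub Real.volume_Iic)
      have hSne : S.Nonempty := ⟨xstar, hxS⟩
      set A := sInf S with hA
      set B := sSup S with hB
      have hIcc : S ⊆ Set.Icc A B := fun y hy => ⟨csInf_le hbddB hy, le_csSup hbddA hy⟩
      have hAB : A ≤ B := le_trans (hIcc hxS).1 (hIcc hxS).2
      have hIoo : Set.Ioo A B ⊆ S := by
        intro z hz
        obtain ⟨u, huS, huz⟩ := exists_lt_of_csInf_lt hSne hz.1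
        obtain ⟨v, hvS, hzv⟩ := exists_lt_of_lt_csSup hSne hz.2
        exact hord u huS v hvS ⟨huz.le, hzv.le⟩
      have hvol : ENNReal.ofReal (B - A) ≤ volume S := by
        rw [← Real.volume_Ioo]
        exact measure_mono hIoo
      have hwInt : IntegrableOn w (Set.Icc A B) := by
        have := (dk_ii hF_closed hF_below hF_above hgap k A B).1
        rw [integrableOn_Icc_iff_integrableOn_Ioc]
        simpa [Set.uIoc_of_le hAB] using this
      have hνS : ν S ≤ ENNReal.ofReal (∫ x in A..B, w x) := by
        calc ν S ≤ ν (Set.Icc A B) := measure_mono hIcc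
          _ = ∫⁻ x in Set.Icc A B, W x := withDensity_apply W measurableSet_Icc
          _ = ENNReal.ofReal (∫ x in Set.Icc A B, w x) :=
            (ofReal_integral_eq_lintegral_ofReal hwInt
              (ae_of_all _ fun x => hw_nonneg x)).symm
          _ = ENNReal.ofReal (∫ x in A..B, w x) := by
            rw [intervalIntegral.integral_of_le hAB, integral_Icc_eq_integral_Ioc]
      have hib := interval_bound hF_closed hF_below hF_above hδ hgap (k := k) hAB
      have hib' : ∫ x in A..B, w x
          ≤ δ ^ k / ((k:ℝ) + 1) * (B - A) + 4 * δ ^ (k + 1) / ((k:ℝ) + 1) := by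
        have h2 : ∫ x in A..B, w x ≤ (δ ^ k * (B - A) + 4 * δ ^ (k + 1)) / ((k:ℝ) + 1) := by
          rw [le_div_iff₀ hk1]
          nlinarith [hib]
        calc ∫ x in A..B, w x ≤ (δ ^ k * (B - A) + 4 * δ ^ (k + 1)) / ((k:ℝ) + 1) := h2
          _ = δ ^ k / ((k:ℝ) + 1) * (B - A) + 4 * δ ^ (k + 1) / ((k:ℝ) + 1) := by ring
      have htmem : t ∈ Set.Ioc (0:ℝ) M := ⟨ht, htM.le⟩
      have hindic : (Set.Ioc (0:ℝ) M).indicator (fun _ => C2) t = C2 :=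
        Set.indicator_of_mem htmem _
      have hd0 : 0 ≤ δ ^ k / ((k:ℝ) + 1) := by positivity
      calc ν S ≤ ENNReal.ofReal (∫ x in A..B, w x) := hνS
        _ ≤ ENNReal.ofReal (δ ^ k / ((k:ℝ) + 1) * (B - A) + 4 * δ ^ (k + 1) / ((k:ℝ) + 1)) :=
          ENNReal.ofReal_le_ofReal hib'
        _ ≤ ENNReal.ofReal (δ ^ k / ((k:ℝ) + 1) * (B - A)) + C2 := ENNReal.ofReal_add_le
        _ = C1 * ENNReal.ofReal (B - A) + C2 := by rw [ENNReal.ofReal_mul hd0]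
        _ ≤ C1 * volume S + C2 := add_le_add_left (mul_le_mul_right hvol C1) _
        _ = C1 * volume S + (Set.Ioc (0:ℝ) M).indicator (fun _ => C2) t := by rw [hindic]
    · push_neg at htM
      have hempty : {a : ℝ | t < f a} = ∅ :=
        Set.eq_empty_iff_forall_notMem.2 fun a ha => absurd ha (not_lt.2 ((hfM a).trans htM))
      rw [hempty]
      simp
  -- integrate the bound
  have hanti : Antitone fun t : ℝ => volume {a | t < f a} := fun s t hst =>
    measure_mono fun a ha => lt_of_le_of_lt hst ha
  have hmeas_t : Measurable fun t : ℝ => volume {a | t < f a} := hanti.measurable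
  have hstep2 : ∫⁻ t in Set.Ioi (0:ℝ), ν {a | t < f a}
      ≤ C1 * (∫⁻ t in Set.Ioi (0:ℝ), volume {a | t < f a}) + C2 * ENNReal.ofReal M := by
    calc ∫⁻ t in Set.Ioi (0:ℝ), ν {a | t < f a}
        ≤ ∫⁻ t in Set.Ioi (0:ℝ),
            (C1 * volume {a | t < f a} + (Set.Ioc (0:ℝ) M).indicator (fun _ => C2) t) := by
          apply lintegral_mono_ae
          rw [ae_restrict_iff' measurableSet_Ioi]
          exact ae_of_all _ key
      _ = (∫⁻ t in Set.Ioi (0:ℝ), C1 * volume {a | t < f a})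
            + ∫⁻ t in Set.Ioi (0:ℝ), (Set.Ioc (0:ℝ) M).indicator (fun _ => C2) t := by
          rw [lintegral_add_left (hmeas_t.const_mul C1)]
      _ = C1 * (∫⁻ t in Set.Ioi (0:ℝ), volume {a | t < f a}) + C2 * ENNReal.ofReal M := by
          rw [lintegral_const_mul C1 hmeas_t, lintegral_indicator measurableSet_Ioc]
          congr 1
          rw [setLIntegral_const, Measure.restrict_apply measurableSet_Ioc,
            Set.inter_eq_left.2 Set.Ioc_subset_Ioi_self, Real.volume_Ioc, sub_zero]
  -- assemble
  have hfvol : ∫⁻ t in Set.Ioi (0:ℝ), volume {a | t < f a} = ENNReal.ofReal (∫ x, f x) := by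
    rw [← lintegral_eq_lintegral_meas_lt volume (ae_of_all _ hf_nonneg) hf_int.aemeasurable,
      ← ofReal_integral_eq_lintegral_ofReal hf_int (ae_of_all _ hf_nonneg)]
  have hintf0 : 0 ≤ ∫ x, f x := integral_nonneg hf_nonneg
  have hC2M : C2 * ENNReal.ofReal M
      = ENNReal.ofReal (4 * δ ^ (k + 1) / ((k:ℝ) + 1) * M) := by
    rw [hC2, ENNReal.ofReal_mul (by positivity)]
  have hC1I : C1 * ENNReal.ofReal (∫ x, f x)
      = ENNReal.ofReal (δ ^ k / ((k:ℝ) + 1) * ∫ x, f x) := by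
    rw [hC1, ENNReal.ofReal_mul (by positivity)]
  have main : (∫⁻ x, ENNReal.ofReal (f x * w x))
      ≤ ENNReal.ofReal (δ ^ k / ((k:ℝ) + 1) * (∫ x, f x)
          + 4 * δ ^ (k + 1) / ((k:ℝ) + 1) * M) := by
    rw [← hT1, hlc]
    calc ∫⁻ t in Set.Ioi (0:ℝ), ν {a | t < f a}
        ≤ C1 * (∫⁻ t in Set.Ioi (0:ℝ), volume {a | t < f a}) + C2 * ENNReal.ofReal M := hstep2
      _ = ENNReal.ofReal (δ ^ k / ((k:ℝ) + 1) * ∫ x, f x)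
          + ENNReal.ofReal (4 * δ ^ (k + 1) / ((k:ℝ) + 1) * M) := by
          rw [hfvol, hC1I, hC2M]
      _ = ENNReal.ofReal (δ ^ k / ((k:ℝ) + 1) * (∫ x, f x)
          + 4 * δ ^ (k + 1) / ((k:ℝ) + 1) * M) :=
          (ENNReal.ofReal_add (mul_nonneg (by positivity) hintf0)
            (mul_nonneg (by positivity) hM0)).symm
  rw [hLHS]
  have hR0 : 0 ≤ δ ^ k / ((k:ℝ) + 1) * (∫ x, f x) + 4 * δ ^ (k + 1) / ((k:ℝ) + 1) * M :=
    add_nonneg (mul_nonneg (by positivity) hintf0) (mul_nonneg (by positivity) hM0)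
  have hfin := ENNReal.toReal_le_of_le_ofReal hR0 main
  calc (∫⁻ x, ENNReal.ofReal (f x * w x)).toReal
      ≤ δ ^ k / ((k:ℝ) + 1) * (∫ x, f x) + 4 * δ ^ (k + 1) / ((k:ℝ) + 1) * M := hfin
    _ = (δ ^ k / ((k:ℝ) + 1)) * (∫ x, f x) + (4 / ((k:ℝ) + 1)) * M * δ ^ (k + 1) := by ring
end
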